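/- (Reduction of the general Lax pair of the Toda hierarchy.) Let r ≥ 1 be a natural number, c_0 ∈ ℝ, I ⊆ ℝ an open interval, σ : I → ℝ twice differentiable with σ'(t) > 0 and σ''(t) = -(r+1) c_0 σ'(t)^2 on I, ν : ℤ → ℝ arbitrary, η(n,t) = ν(n) + σ(t), and H, G : ℝ → ℝ. Let 𝒫_j, 𝒬_j : ℤ × I → ℝ be the sequences obtained by applying the Toda-hierarchy recursion to (Ĥ, Ĝ), where Ĥ(n,t) = H(η(n,t)), Ĝ(n,t) = G(η(n,t)), and define the reduced polynomials P̂_r(z; n, t) = Σ_{j=0}^{r} z^j 𝒫_{r-j}(n,t) and Q̂_r(z; n, t) = z^{r+1} + Σ_{j=0}^{r} z^j 𝒬_{r-j}(n,t) - 𝒫_{r+1}(n,t). Fix λ ∈ ℝ, set ζ(t) = λ / σ'(t)^{1/(r+1)}, u(n,t) = σ'(t)^{1/(r+1)} H(η(n,t)), v(n,t) = σ'(t)^{1/(r+1)} G(η(n,t)), and let p_j, q_j be the recursion sequences of (u, v) with P_r, Q_r the corresponding polynomials in λ. Let φ : ℝ × ℝ → ℝ be differentiable in both arguments and suppose that for all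 n ∈ ℤ, t ∈ I, writing η = η(n,t), η̄ = η(n+1,t), η̲ = η(n-1,t), z = ζ(t): z φ(η,z) = H(η) φ(η̄,z) + H(η̲) φ(η̲,z) + G(η) φ(η,z), and c_0 z ∂_ζ φ(η,z) + ∂_η φ(η,z) = 2 H(η) P̂_r(z; n, t) φ(η̄,z) - Q̂_r(z; n, t) φ(η,z). Then ψ(n,t) := φ(η(n,t), ζ(t)) satisfies λ ψ(n,t) = u(n,t) ψ(n+1,t) + u(n-1,t) ψ(n-1,t) + v(n,t) ψ(n,t) and ∂_t ψ(n,t) = 2 u(n,t) P_r(λ; n, t) ψ(n+1,t) - Q_r(λ; n, t) ψ(n,t), for all n ∈ ℤ, t ∈ I. -/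

import Mathlib

mutual
/-- `p`-sequence of the Toda-hierarchy recursion generated from `(u, v)`:
`p₀ = 1`, `p_{r+1}(n,t) = (1/2)(q_r(n,t) + q_r(n-1,t)) + v(n,t) p_r(n,t)`. -/
noncomputable def todaP (u v : ℤ × ℝ → ℝ) : ℕ → ℤ × ℝ → ℝ
  | 0, _ => 1
  | (r+1), (n, t) =>
      (1/2) * (todaQ u v r (n, t) + todaQ u v r (n-1, t)) + v (n, t) * todaP u v r (n, t)
termination_by r _ => r

/-- `q`-sequence of the Toda-hierarchy recursion generated from `(u, v)`:
`q₀ = 0`,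
`q_{r+1}(n,t) = 2 u(n,t)² Σ_{l=0}^{r} p_{r-l}(n,t) p_l(n+1,t) - (1/2) Σ_{l=0}^{r} q_{r-l}(n,t) q_l(n,t)`. -/
noncomputable def todaQ (u v : ℤ × ℝ → ℝ) : ℕ → ℤ × ℝ → ℝ
  | 0, _ => 0
  | (r+1), (n, t) =>
      2 * (u (n, t))^2 * ∑ l ∈ (Finset.range (r+1)).attach,
          todaP u v (r - l.1) (n, t) * todaP u v l.1 (n+1, t)
      - (1/2) * ∑ l ∈ (Finset.range (r+1)).attach,
          todaQ u v (r - l.1) (n, t) * todaQ u v l.1 (n, t)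
termination_by r _ => r
decreasing_by
  all_goals (try (have hl := l.2; simp only [Finset.mem_range] at hl)); omega
end

/-- The `r`-th flow `TL_r` of the Toda hierarchy, at lattice site `n` and time `t`:
`∂ₜ u(n,t) = u(n,t)(p_{r+1}(n+1,t) - p_{r+1}(n,t))`,
`∂ₜ v(n,t) = q_{r+1}(n,t) - q_{r+1}(n-1,t)`. -/
def TodaFlow (u v : ℤ × ℝ → ℝ) (r : ℕ) (n : ℤ) (t : ℝ) : Prop :=
  HasDerivAt (fun s => u (n, s))
    (u (n, t) * (todaP u v (r+1) (n+1, t) - todaP u v (r+1) (n, t))) t ∧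
  HasDerivAt (fun s => v (n, s))
    (todaQ u v (r+1) (n, t) - todaQ u v (r+1) (n-1, t)) t

/-- The Lax-pair polynomial `P_r(λ; n, t) = Σ_{j=0}^{r} λ^j p_{r-j}(n,t)` of the Toda
hierarchy. -/
noncomputable def todaLaxP (u v : ℤ × ℝ → ℝ) (r : ℕ) (lam : ℝ) (n : ℤ) (t : ℝ) : ℝ :=
  ∑ j ∈ Finset.range (r+1), lam^j * todaP u v (r-j) (n, t)

/-- The Lax-pair polynomial
`Q_r(λ; n, t) = λ^{r+1} + Σ_{j=0}^{r} λ^j q_{r-j}(n,t) - p_{r+1}(n,t)` of the Toda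
hierarchy. -/
noncomputable def todaLaxQ (u v : ℤ × ℝ → ℝ) (r : ℕ) (lam : ℝ) (n : ℤ) (t : ℝ) : ℝ :=
  lam^(r+1) + ∑ j ∈ Finset.range (r+1), lam^j * todaQ u v (r-j) (n, t)
    - todaP u v (r+1) (n, t)

lemma toda_scale (u v U V : ℤ × ℝ → ℝ) (t s : ℝ)
    (hu : ∀ n : ℤ, u (n, t) = s * U (n, t))
    (hv : ∀ n : ℤ, v (n, t) = s * V (n, t)) :
    ∀ j : ℕ, ∀ n : ℤ, todaP u v j (n, t) = s ^ j * todaP U V j (n, t)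
      ∧ todaQ u v j (n, t) = s ^ (j+1) * todaQ U V j (n, t) := by
  intro j
  induction j using Nat.strong_induction_on with
  | _ j ih =>
    match j with
    | 0 => intro n; simp [todaP, todaQ]
    | (r+1) =>
      intro n
      constructor
      · rw [todaP, todaP, (ih r (by omega) n).2, (ih r (by omega) (n-1)).2,
          (ih r (by omega) n).1, hv]
        ring
      · rw [todaQ, todaQ]
        have hs1 : ∀ l ∈ (Finset.range (r+1)).attach,
            todaP u v (r - l.1) (n, t) * todaP u v l.1 (n+1, t)
            = s ^ r * (todaP U V (r - l.1) (n, t) * todaP U V l.1 (n+1, t)) := by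
          intro l _
          have hl : l.1 < r + 1 := Finset.mem_range.mp l.2
          rw [(ih (r - l.1) (by omega) n).1, (ih l.1 (by omega) (n+1)).1,
            show s ^ (r - l.1) * todaP U V (r - l.1) (n, t) * (s ^ l.1 * todaP U V l.1 (n+1, t))
              = s ^ (r - l.1 + l.1) * (todaP U V (r - l.1) (n, t) * todaP U V l.1 (n+1, t)) by
                rw [pow_add]; ring]
          congr 2
          omega
        have hs2 : ∀ l ∈ (Finset.range (r+1)).attach,
            todaQ u v (r - l.1) (n, t) * todaQ u v l.1 (n, t)
            = s ^ (r+2) * (todaQ U V (r - l.1) (n, t) * todaQ U V l.1 (n, t)) := by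
          intro l _
          have hl : l.1 < r + 1 := Finset.mem_range.mp l.2
          rw [(ih (r - l.1) (by omega) n).2, (ih l.1 (by omega) n).2,
            show s ^ (r - l.1 + 1) * todaQ U V (r - l.1) (n, t) * (s ^ (l.1 + 1) * todaQ U V l.1 (n, t))
              = s ^ (r - l.1 + 1 + (l.1 + 1)) * (todaQ U V (r - l.1) (n, t) * todaQ U V l.1 (n, t)) by
                rw [pow_add]; ring]
          congr 2
          omega
        rw [Finset.sum_congr rfl hs1, Finset.sum_congr rfl hs2, ← Finset.mul_sum,
          ← Finset.mul_sum, hu]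
        ring

lemma todaLaxP_scale (u v U V : ℤ × ℝ → ℝ) (t s lam : ℝ) (hs : s ≠ 0)
    (hu : ∀ n : ℤ, u (n, t) = s * U (n, t))
    (hv : ∀ n : ℤ, v (n, t) = s * V (n, t)) (r : ℕ) (n : ℤ) :
    todaLaxP u v r lam n t = s ^ r * todaLaxP U V r (lam / s) n t := by
  unfold todaLaxP
  rw [Finset.mul_sum]
  refine Finset.sum_congr rfl fun j hj => ?_
  have hj' : j ≤ r := by have := Finset.mem_range.mp hj; omega
  rw [(toda_scale u v U V t s hu hv (r - j) n).1, div_pow,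
    show s ^ r = s ^ (r - j) * s ^ j by rw [← pow_add]; congr 1; omega]
  field_simp

lemma todaLaxQ_scale (u v U V : ℤ × ℝ → ℝ) (t s lam : ℝ) (hs : s ≠ 0)
    (hu : ∀ n : ℤ, u (n, t) = s * U (n, t))
    (hv : ∀ n : ℤ, v (n, t) = s * V (n, t)) (r : ℕ) (n : ℤ) :
    todaLaxQ u v r lam n t = s ^ (r+1) * todaLaxQ U V r (lam / s) n t := by
  unfold todaLaxQ
  rw [mul_sub, mul_add, Finset.mul_sum, (toda_scale u v U V t s hu hv (r+1) n).1]
  congr 1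
  · congr 1
    · rw [div_pow]; field_simp
    · refine Finset.sum_congr rfl fun j hj => ?_
      have hj' : j ≤ r := by have := Finset.mem_range.mp hj; omega
      rw [(toda_scale u v U V t s hu hv (r - j) n).2, div_pow,
        show s ^ (r + 1) = s ^ (r - j + 1) * s ^ j by rw [← pow_add]; congr 1; omega]
      field_simp
/-- Reduction of the general Lax pair of the Toda hierarchy: if
`φ(η, ζ)` solves the reduced `r`-th flow Lax pair built from the Toda-hierarchy
recursion applied to `Ĥ(n,t) = H(η(n,t))`, `Ĝ(n,t) = G(η(n,t))`, along the reduction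
`η(n,t) = ν(n) + σ(t)`, `ζ(t) = λ/σ'(t)^(1/(r+1))`, then `ψ(n,t) = φ(η(n,t), ζ(t))`
solves the Lax pair of the `r`-th flow of the Toda hierarchy with
`u = σ'^(1/(r+1)) H(η)`, `v = σ'^(1/(r+1)) G(η)`. -/
theorem lax_reduction_general_flow
    (r : ℕ) (hr : 1 ≤ r)
    (c₀ a b lam : ℝ) (σ σ' σ'' : ℝ → ℝ)
    (hσ : ∀ t ∈ Set.Ioo a b, HasDerivAt σ (σ' t) t)
    (hσ' : ∀ t ∈ Set.Ioo a b, HasDerivAt σ' (σ'' t) t)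
    (hσpos : ∀ t ∈ Set.Ioo a b, 0 < σ' t)
    (hode : ∀ t ∈ Set.Ioo a b, σ'' t = -((r : ℝ) + 1) * c₀ * (σ' t)^2)
    (ν : ℤ → ℝ) (η : ℤ → ℝ → ℝ) (hη : ∀ (n : ℤ) (t : ℝ), η n t = ν n + σ t)
    (H G : ℝ → ℝ)
    (Hhat Ghat : ℤ × ℝ → ℝ)
    (hHhat : ∀ (n : ℤ) (t : ℝ), Hhat (n, t) = H (η n t))
    (hGhat : ∀ (n : ℤ) (t : ℝ), Ghat (n, t) = G (η n t))
    (ζ : ℝ → ℝ) (hζ : ∀ t : ℝ, ζ t = lam / (σ' t) ^ (((r : ℝ) + 1)⁻¹))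
    (u v : ℤ × ℝ → ℝ)
    (hu : ∀ (n : ℤ) (t : ℝ), u (n, t) = (σ' t) ^ (((r : ℝ) + 1)⁻¹) * H (η n t))
    (hv : ∀ (n : ℤ) (t : ℝ), v (n, t) = (σ' t) ^ (((r : ℝ) + 1)⁻¹) * G (η n t))
    (φ φη φζ : ℝ × ℝ → ℝ)
    (hφ : ∀ p : ℝ × ℝ, HasFDerivAt φ
      (φη p • ContinuousLinearMap.fst ℝ ℝ ℝ + φζ p • ContinuousLinearMap.snd ℝ ℝ ℝ) p)
    (hlax₁ : ∀ (n : ℤ), ∀ t ∈ Set.Ioo a b,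
      ζ t * φ (η n t, ζ t) =
        H (η n t) * φ (η (n+1) t, ζ t) + H (η (n-1) t) * φ (η (n-1) t, ζ t)
          + G (η n t) * φ (η n t, ζ t))
    (hlax₂ : ∀ (n : ℤ), ∀ t ∈ Set.Ioo a b,
      c₀ * ζ t * φζ (η n t, ζ t) + φη (η n t, ζ t) =
        2 * H (η n t) * todaLaxP Hhat Ghat r (ζ t) n t * φ (η (n+1) t, ζ t)
          - todaLaxQ Hhat Ghat r (ζ t) n t * φ (η n t, ζ t))
    (ψ : ℤ → ℝ → ℝ) (hψ : ∀ (n : ℤ) (t : ℝ), ψ n t = φ (η n t, ζ t)) :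
    ∀ (n : ℤ), ∀ t ∈ Set.Ioo a b,
      lam * ψ n t = u (n, t) * ψ (n+1) t + u (n-1, t) * ψ (n-1) t + v (n, t) * ψ n t ∧
      HasDerivAt (fun s => ψ n s)
        (2 * u (n, t) * todaLaxP u v r lam n t * ψ (n+1) t
          - todaLaxQ u v r lam n t * ψ n t) t := by
  intro n t ht
  have hx : 0 < σ' t := hσpos t ht
  obtain ⟨s, hsdef⟩ : ∃ s, (σ' t) ^ (((r:ℝ)+1)⁻¹) = s := ⟨_, rfl⟩
  have hspos : 0 < s := hsdef ▸ Real.rpow_pos_of_pos hx _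
  have hrne : ((r:ℝ)+1) ≠ 0 := by positivity
  have hspow : s ^ (r+1) = σ' t := by
    rw [← hsdef, ← Real.rpow_natCast ((σ' t) ^ (((r:ℝ)+1)⁻¹)) (r+1),
      ← Real.rpow_mul hx.le]
    push_cast
    rw [inv_mul_cancel₀ hrne, Real.rpow_one]
  have hu' : ∀ m : ℤ, u (m, t) = s * Hhat (m, t) := fun m => by
    rw [hu, hHhat, hsdef]
  have hv' : ∀ m : ℤ, v (m, t) = s * Ghat (m, t) := fun m => by
    rw [hv, hGhat, hsdef]
  have hz : ζ t = lam / s := by rw [hζ, hsdef]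
  constructor
  · have h1 := hlax₁ n t ht
    have hlam : lam = ζ t * s := by rw [hz]; field_simp
    simp only [hψ, hu, hv, hsdef]
    rw [hlam]
    linear_combination s * h1
  · have h2 := hlax₂ n t ht
    have hgd : HasDerivAt (fun w => (σ' w) ^ (((r:ℝ)+1)⁻¹))
        (σ'' t * (((r:ℝ)+1)⁻¹) * (σ' t) ^ ((((r:ℝ)+1)⁻¹) - 1)) t :=
      (hσ' t ht).rpow_const (Or.inl hx.ne')
    have hζd : HasDerivAt ζ (c₀ * σ' t * ζ t) t := by
      have h0 : ζ = fun w => lam / (σ' w) ^ (((r:ℝ)+1)⁻¹) := funext fun w => hζ w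
      rw [h0]
      have hscpos : (0:ℝ) < (σ' t) ^ (((r:ℝ)+1)⁻¹) :=
        Real.rpow_pos_of_pos hx _
      have hdiv := (hasDerivAt_const t lam).div hgd hscpos.ne'
      refine hdiv.congr_deriv ?_
      symm
      have hcinv : (((r:ℝ)+1)⁻¹) * ((r:ℝ)+1) = 1 := inv_mul_cancel₀ hrne
      have e1 : (σ' t) ^ (2:ℕ) * (σ' t) ^ ((((r:ℝ)+1)⁻¹)-1)
          = (σ' t) ^ (((r:ℝ)+1)⁻¹) * σ' t := by
        rw [← Real.rpow_natCast (σ' t) 2, ← Real.rpow_add hx,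
          show ((2:ℕ):ℝ) + ((((r:ℝ)+1)⁻¹) - 1) = (((r:ℝ)+1)⁻¹) + 1 by push_cast; ring,
          Real.rpow_add hx, Real.rpow_one]
      have hnum : 0 * (σ' t) ^ (((r:ℝ)+1)⁻¹)
            - lam * (σ'' t * (((r:ℝ)+1)⁻¹) * (σ' t) ^ ((((r:ℝ)+1)⁻¹) - 1))
          = c₀ * σ' t * lam * (σ' t) ^ (((r:ℝ)+1)⁻¹) := by
        rw [hode t ht]
        linear_combination (lam * c₀ * ((((r:ℝ)+1)⁻¹) * ((r:ℝ)+1))) * e1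
          + (c₀ * lam * ((σ' t) ^ (((r:ℝ)+1)⁻¹)) * σ' t) * hcinv
      rw [hnum]
      field_simp
    have hηd : HasDerivAt (fun w => η n w) (σ' t) t := by
      have h0 : (fun w => η n w) = fun w => ν n + σ w := funext fun w => hη n w
      rw [h0]; exact (hσ t ht).const_add (ν n)
    have hψd : HasDerivAt (fun w => ψ n w)
        (φη (η n t, ζ t) * σ' t + φζ (η n t, ζ t) * (c₀ * σ' t * ζ t)) t := by
      have h0 : (fun w => ψ n w) = fun w => φ (η n w, ζ w) := funext fun w => hψ n w
      rw [h0]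
      have hc := (hφ (η n t, ζ t)).comp_hasDerivAt t (hηd.prodMk hζd)
      simp at hc
      exact hc
    convert hψd using 1
    rw [todaLaxP_scale u v Hhat Ghat t s lam hspos.ne' hu' hv' r n,
      todaLaxQ_scale u v Hhat Ghat t s lam hspos.ne' hu' hv' r n, ← hz]
    simp only [hψ, hu, hsdef]
    linear_combination (-(s^(r+1))) * h2
      + (φη (η n t, ζ t) + c₀ * ζ t * φζ (η n t, ζ t)) * hspow
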